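/- arXiv:math/0110050 — 3 statements merged into one kernel-verified Lean document; each statement's English description precedes it below -/
import Mathlib

section
/- Let r be a positive integer and b an integer coprime to r. Suppose (s1, s2, s3) is a triple of nonnegative integers, not all zero, such that s1 - s2 + b·s3 ≡ 0 (mod r). Then there exist triples (t1, t2, t3) and (u1, u2, u3) of nonnegative integers with t_i + u_i = s_i for i = 1, 2, 3, such that t1 - t2 + b·t3 ≡ 1 (mod r) and u1 - u2 + b·u3 ≡ -1 (mod r). -/
theorem stmt0 (r : ℕ) (hr : 0 < r) (b : ℤ) (hb : IsCoprime b (r : ℤ))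
    (s1 s2 s3 : ℕ) (hs : ¬(s1 = 0 ∧ s2 = 0 ∧ s3 = 0))
    (hw : (s1 : ℤ) - s2 + b * s3 ≡ 0 [ZMOD (r : ℤ)]) :
    ∃ t1 t2 t3 u1 u2 u3 : ℕ,
      t1 + u1 = s1 ∧ t2 + u2 = s2 ∧ t3 + u3 = s3 ∧
      ((t1 : ℤ) - t2 + b * t3 ≡ 1 [ZMOD (r : ℤ)]) ∧
      ((u1 : ℤ) - u2 + b * u3 ≡ -1 [ZMOD (r : ℤ)]) := by
  rw [Int.modEq_iff_dvd] at hw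
  rcases Nat.eq_zero_or_pos s1 with h1 | h1
  · rcases Nat.eq_zero_or_pos s2 with h2 | h2
    · -- s1 = s2 = 0, s3 > 0
      subst h1; subst h2
      have h3 : 0 < s3 := by omega
      have hbs3 : (r : ℤ) ∣ b * s3 := by simpa using hw
      have hrs3 : (r : ℤ) ∣ (s3 : ℤ) := hb.symm.dvd_of_dvd_mul_left hbs3
      have hrle : r ≤ s3 := Nat.le_of_dvd h3 (by exact_mod_cast hrs3)
      obtain ⟨a, v, huv⟩ := hb
      have hrpos : (0 : ℤ) < (r : ℤ) := by exact_mod_cast hr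
      obtain ⟨k, hk⟩ : ∃ k : ℕ, (k : ℤ) = a % (r : ℤ) :=
        ⟨(a % (r : ℤ)).toNat, Int.toNat_of_nonneg (Int.emod_nonneg a (by omega))⟩
      have hklt : k < r := by
        have := Int.emod_lt_of_pos a hrpos
        omega
      have hdiv : (r : ℤ) ∣ 1 - b * k := by
        refine ⟨v + b * (a / r), ?_⟩
        rw [hk, Int.emod_def]
        linear_combination -huv
      refine ⟨0, 0, k, 0, 0, s3 - k, by omega, by omega, by omega, ?_, ?_⟩
      · rw [Int.modEq_iff_dvd]
        convert hdiv using 1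
        push_cast
        ring
      · rw [Int.modEq_iff_dvd]
        have hcast : ((s3 - k : ℕ) : ℤ) = (s3 : ℤ) - k := by omega
        have : (-1 : ℤ) - (((0:ℕ) : ℤ) - ((0:ℕ) : ℤ) + b * ((s3 - k : ℕ) : ℤ))
            = (-(1 - b * k)) - b * s3 := by rw [hcast]; push_cast; ring
        rw [this]
        exact (dvd_neg.mpr hdiv).sub hbs3
    · -- s1 = 0, s2 > 0
      refine ⟨s1, s2 - 1, s3, 0, 1, 0, by omega, by omega, by omega, ?_, ?_⟩
      · rw [Int.modEq_iff_dvd]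
        have hc : ((s2 - 1 : ℕ) : ℤ) = (s2 : ℤ) - 1 := by omega
        have : (1 : ℤ) - ((s1 : ℤ) - ((s2 - 1 : ℕ) : ℤ) + b * s3)
            = 0 - ((s1 : ℤ) - s2 + b * s3) := by rw [hc]; ring
        rw [this]; exact hw
      · have : ((0:ℕ) : ℤ) - ((1:ℕ) : ℤ) + b * ((0:ℕ) : ℤ) = -1 := by push_cast; ring
        rw [this]
  · -- s1 > 0
    refine ⟨1, 0, 0, s1 - 1, s2, s3, by omega, by omega, by omega, ?_, ?_⟩
    · have : ((1:ℕ) : ℤ) - ((0:ℕ) : ℤ) + b * ((0:ℕ) : ℤ) = 1 := by push_cast; ring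
      rw [this]
    · rw [Int.modEq_iff_dvd]
      have hc : ((s1 - 1 : ℕ) : ℤ) = (s1 : ℤ) - 1 := by omega
      have : (-1 : ℤ) - (((s1 - 1 : ℕ) : ℤ) - (s2 : ℤ) + b * s3)
          = 0 - ((s1 : ℤ) - s2 + b * s3) := by rw [hc]; ring
      rw [this]; exact hw
end

section
/- Let r ≥ 5 be an odd integer. The smallest nonnegative integer w such that the element (w, -4 mod r) of ℤ × ℤ/r lies in the additive semigroup generated by (1, 1), (r-1, -1), and (4, 4) is w = r - 4. -/
theorem stmt13 (r : ℕ) (hr : 5 ≤ r) (hodd : Odd r) :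
    IsLeast {w : ℕ | ∃ k1 k2 k3 : ℕ,
      (w : ℤ) = k1 * 1 + k2 * ((r : ℤ) - 1) + k3 * 4 ∧
      (k1 : ℤ) * 1 + (k2 : ℤ) * (-1) + (k3 : ℤ) * 4 ≡ -4 [ZMOD (r : ℤ)]}
      (r - 4) := by
  have h4 : (4:ℕ) ≤ r := by omega
  constructor
  · refine ⟨r - 4, 0, 0, ?_, Int.ModEq.symm (Int.modEq_iff_dvd.mpr ⟨1, by push_cast [h4]; ring⟩)⟩
    push_cast [h4]; ring
  · rintro w ⟨k1, k2, k3, h1, h2⟩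
    obtain ⟨m, hm⟩ := Int.modEq_iff_dvd.mp h2
    have hw : (w:ℤ) + 4 = r * (k2 - m) := by linear_combination h1 - hm
    have hd : (r:ℤ) ≤ (w:ℤ) + 4 := Int.le_of_dvd (by positivity) ⟨k2 - m, hw⟩
    omega
end

section
/- Let r ≥ 3 be an odd integer. The smallest nonnegative integer w such that (w, 1 mod r) lies in the additive subsemigroup of ℤ × ℤ/r generated by (r+1, 1), (r-1, -1), (2, 2), and (r, 0) is w = r + 1. Moreover, the smallest nonnegative integer w' such that (w', 2 mod r) lies in this semigroup is w' = 2. -/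
theorem stmt15 (r : ℕ) (hr : 3 ≤ r) (hodd : Odd r) :
    IsLeast {w : ℕ | ∃ k1 k2 k3 k4 : ℕ,
      (w : ℤ) = k1 * ((r : ℤ) + 1) + k2 * ((r : ℤ) - 1) + k3 * 2 + k4 * r ∧
      (k1 : ℤ) - k2 + 2 * k3 ≡ 1 [ZMOD (r : ℤ)]} (r + 1) ∧
    IsLeast {w : ℕ | ∃ k1 k2 k3 k4 : ℕ,
      (w : ℤ) = k1 * ((r : ℤ) + 1) + k2 * ((r : ℤ) - 1) + k3 * 2 + k4 * r ∧
      (k1 : ℤ) - k2 + 2 * k3 ≡ 2 [ZMOD (r : ℤ)]} 2 := by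
  have hr' : (3:ℤ) ≤ (r:ℤ) := by exact_mod_cast hr
  constructor
  · constructor
    · refine ⟨1, 0, 0, 0, by push_cast; ring, ?_⟩
      norm_num
    · rintro w ⟨k1, k2, k3, k4, heq, hcong⟩
      by_contra hlt
      push_neg at hlt
      have hw : (w:ℤ) ≤ (r:ℤ) := by exact_mod_cast (by omega : w ≤ r)
      have hk1 : (0:ℤ) ≤ (k1:ℤ) := Int.natCast_nonneg _
      have hk2 : (0:ℤ) ≤ (k2:ℤ) := Int.natCast_nonneg _
      have hk3 : (0:ℤ) ≤ (k3:ℤ) := Int.natCast_nonneg _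
      have hk4 : (0:ℤ) ≤ (k4:ℤ) := Int.natCast_nonneg _
      have hp1 : (0:ℤ) ≤ (k1:ℤ) * ((r:ℤ) + 1) := by positivity
      have hp2 : (0:ℤ) ≤ (k2:ℤ) * ((r:ℤ) - 1) :=
        mul_nonneg hk2 (by linarith)
      have hp3 : (0:ℤ) ≤ (k3:ℤ) * 2 := by positivity
      have hp4 : (0:ℤ) ≤ (k4:ℤ) * (r:ℤ) := by positivity
      -- k1 = 0
      have hk10 : k1 = 0 := by
        by_contra h
        have h1 : (1:ℤ) ≤ (k1:ℤ) := by exact_mod_cast Nat.one_le_iff_ne_zero.mpr h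
        nlinarith
      -- k2 ≤ 1
      have hk21 : (k2:ℤ) ≤ 1 := by
        by_contra h
        push_neg at h
        have h2 : (2:ℤ) ≤ (k2:ℤ) := by omega
        nlinarith
      -- 2*k3 ≤ r
      have hk3r : 2 * (k3:ℤ) ≤ (r:ℤ) := by linarith
      obtain ⟨m, hm⟩ := hcong.dvd
      rw [hk10] at hm
      push_cast at hm
      -- hm : 1 - (0 - k2 + 2*k3) = r * m
      have hub : (r:ℤ) * m < (r:ℤ) := by linarith
      have hlb : -(r:ℤ) < (r:ℤ) * m := by linarith
      have hm0 : m = 0 := by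
        rcases lt_trichotomy m 0 with h | h | h
        · have h1 : m ≤ -1 := by omega
          have := mul_le_mul_of_nonneg_left h1 (by linarith : (0:ℤ) ≤ (r:ℤ))
          linarith
        · exact h
        · have h1 : (1:ℤ) ≤ m := by omega
          have := mul_le_mul_of_nonneg_left h1 (by linarith : (0:ℤ) ≤ (r:ℤ))
          linarith
      rw [hm0, mul_zero] at hm
      -- hm : 1 - (0 - k2 + 2*k3) = 0, so 2*k3 = k2 + 1
      have hk2n : k2 ≤ 1 := by exact_mod_cast hk21
      have hkey : 2 * k3 = k2 + 1 := by
        have : 2 * (k3:ℤ) = (k2:ℤ) + 1 := by linarith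
        exact_mod_cast this
      have hk2eq : k2 = 1 := by omega
      have hk3eq : k3 = 1 := by omega
      rw [hk10, hk2eq, hk3eq] at heq
      push_cast at heq
      linarith
  · constructor
    · refine ⟨0, 0, 1, 0, by push_cast; ring, ?_⟩
      norm_num
    · rintro w ⟨k1, k2, k3, k4, heq, hcong⟩
      by_contra hlt
      push_neg at hlt
      have hw : (w:ℤ) ≤ 1 := by exact_mod_cast (by omega : w ≤ 1)
      have hk1 : (0:ℤ) ≤ (k1:ℤ) := Int.natCast_nonneg _
      have hk2 : (0:ℤ) ≤ (k2:ℤ) := Int.natCast_nonneg _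
      have hk3 : (0:ℤ) ≤ (k3:ℤ) := Int.natCast_nonneg _
      have hk4 : (0:ℤ) ≤ (k4:ℤ) := Int.natCast_nonneg _
      have hp1 : (0:ℤ) ≤ (k1:ℤ) * ((r:ℤ) + 1) := by positivity
      have hp2 : (0:ℤ) ≤ (k2:ℤ) * ((r:ℤ) - 1) :=
        mul_nonneg hk2 (by linarith)
      have hp3 : (0:ℤ) ≤ (k3:ℤ) * 2 := by positivity
      have hp4 : (0:ℤ) ≤ (k4:ℤ) * (r:ℤ) := by positivity
      have hk10 : k1 = 0 := by
        by_contra h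
        have h1 : (1:ℤ) ≤ (k1:ℤ) := by exact_mod_cast Nat.one_le_iff_ne_zero.mpr h
        nlinarith
      have hk20 : k2 = 0 := by
        by_contra h
        have h1 : (1:ℤ) ≤ (k2:ℤ) := by exact_mod_cast Nat.one_le_iff_ne_zero.mpr h
        nlinarith
      have hk30 : k3 = 0 := by
        by_contra h
        have h1 : (1:ℤ) ≤ (k3:ℤ) := by exact_mod_cast Nat.one_le_iff_ne_zero.mpr h
        nlinarith
      rw [hk10, hk20, hk30] at hcong
      -- hcong : 0 - 0 + 2*0 ≡ 2 [ZMOD r]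
      obtain ⟨m, hm⟩ := hcong.dvd
      push_cast at hm
      -- hm : 2 - (0 - 0 + 2*0) = r * m
      have hdvd : (r:ℤ) ∣ 2 := ⟨m, by linarith⟩
      have := Int.le_of_dvd (by norm_num) hdvd
      linarith
end
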